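/- Let Γ and Λ be complete graphs on n and m vertices respectively (so A(Γ) ≅ ℤⁿ and A(Λ) ≅ ℤᵐ are free abelian). Let 𝒪 be a set of ornaments, let B_Γ ⊆ VΓ, B_Λ ⊆ VΛ, let δ̂_Γ : B_Γ → 𝒪 and δ̂_Λ : B_Λ → 𝒪 be maps with induced decorations δ_Γ and δ_Λ, and let v ∈ B_Γ and w ∈ B_Λ with l_v = ⟨v⟩ and l_w = ⟨w⟩ the corresponding standard geodesics. Then there exists a decoration-preserving based relative quasi-isometry (A(Γ), 𝒫_{B_Γ}, δ_Γ, l_v) → (A(Λ), 𝒫_{B_Λ}, δ_Λ, l_w) if and only if n = m and there exists a bijection r : B_Γ → B_Λ with δ̂_Λ ∘ r = δ̂_Γ and r(v) = w. -/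

import Mathlib

noncomputable section

universe u v

/-- Word metric (distance function) on a group with respect to a generating set `S`. -/
def wordDist {G : Type*} [Group G] (S : Set G) (g h : G) : ℝ :=
  sInf ((fun l : List G => (l.length : ℝ)) ''
    {l : List G | (∀ x ∈ l, x ∈ S ∨ x⁻¹ ∈ S) ∧ g * l.prod = h})

/-- `f` is `(K, A)`-coarse Lipschitz. -/
def CoarseLipschitzWith {X Y : Type*} (K A : ℝ) (dX : X → X → ℝ) (dY : Y → Y → ℝ)
    (f : X → Y) : Prop :=
  ∀ x x', dY (f x) (f x') ≤ K * dX x x' + A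

/-- `f` is a `(K, A)`-quasi-isometry. -/
def IsQIWith {X Y : Type*} (K A : ℝ) (dX : X → X → ℝ) (dY : Y → Y → ℝ) (f : X → Y) : Prop :=
  1 ≤ K ∧ 0 ≤ A ∧
  (∀ x x', dX x x' / K - A ≤ dY (f x) (f x') ∧ dY (f x) (f x') ≤ K * dX x x' + A) ∧
  (∀ y, ∃ x, dY (f x) y ≤ A)

/-- `f` is a quasi-isometry. -/
def IsQI {X Y : Type*} (dX : X → X → ℝ) (dY : Y → Y → ℝ) (f : X → Y) : Prop :=
  ∃ K A : ℝ, IsQIWith K A dX dY f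

/-- The Hausdorff distance between `S` and `T` (w.r.t. the distance `d`) is at most `r`. -/
def HausLE {X : Type*} (d : X → X → ℝ) (S T : Set X) (r : ℝ) : Prop :=
  (∀ s ∈ S, ∃ t ∈ T, d s t ≤ r) ∧ (∀ t ∈ T, ∃ s ∈ S, d s t ≤ r)

/-- `S` and `T` are at finite Hausdorff distance. -/
def FinHaus {X : Type*} (d : X → X → ℝ) (S T : Set X) : Prop :=
  ∃ r : ℝ, 0 ≤ r ∧ HausLE d S T r

/-- The commutator relations of a right-angled Artin group. -/
def raagRels {V : Type} (Γ : SimpleGraph V) : Set (FreeGroup V) :=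
  {r | ∃ x y : V, Γ.Adj x y ∧
    r = FreeGroup.of x * FreeGroup.of y * (FreeGroup.of x)⁻¹ * (FreeGroup.of y)⁻¹}

/-- The right-angled Artin group `A(Γ)` of a simplicial graph `Γ`. -/
abbrev Raag {V : Type} (Γ : SimpleGraph V) : Type := PresentedGroup (raagRels Γ)

/-- The generator of `Raag Γ` corresponding to a vertex. -/
def raagGen {V : Type} (Γ : SimpleGraph V) (x : V) : Raag Γ :=
  PresentedGroup.of (rels := raagRels Γ) x

/-- The word metric on `Raag Γ` with respect to the vertex generators. -/
def raagDist {V : Type} (Γ : SimpleGraph V) : Raag Γ → Raag Γ → ℝ :=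
  wordDist (Set.range (raagGen Γ))

/-- `A(Γ)` and `A(Λ)` are quasi-isometric (w.r.t. the vertex word metrics). -/
def RaagQI {V W : Type} (Γ : SimpleGraph V) (Λ : SimpleGraph W) : Prop :=
  ∃ f : Raag Γ → Raag Λ, IsQI (raagDist Γ) (raagDist Λ) f

/-- A standard geodesic: the coset `g⟨v⟩`, recorded by a basepoint `g` and a label `v`. -/
structure StdGeod {V : Type} (Γ : SimpleGraph V) where
  base : Raag Γ
  label : V

/-- The parametrization `n ↦ g vⁿ` of a standard geodesic, identifying it with `ℤ`. -/
def StdGeod.param {V : Type} {Γ : SimpleGraph V} (l : StdGeod Γ) : ℤ → Raag Γ :=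
  fun n => l.base * raagGen Γ l.label ^ n

/-- The underlying subset of a standard geodesic. -/
def StdGeod.carrier {V : Type} {Γ : SimpleGraph V} (l : StdGeod Γ) : Set (Raag Γ) :=
  Set.range l.param

/-- Two standard geodesics are parallel if they are at finite Hausdorff distance. -/
def Parallel {V : Type} {Γ : SimpleGraph V} (l k : StdGeod Γ) : Prop :=
  FinHaus (raagDist Γ) l.carrier k.carrier

/-- A based quasi-isometry `(A(Γ), l) → (A(Λ), l')`. -/
def IsBasedQI {V W : Type} {Γ : SimpleGraph V} {Λ : SimpleGraph W}
    (f : Raag Γ → Raag Λ) (l : StdGeod Γ) (l' : StdGeod Λ) : Prop :=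
  IsQI (raagDist Γ) (raagDist Λ) f ∧ FinHaus (raagDist Λ) (f '' l.carrier) l'.carrier

/-- `str(f, l, C) = r`: on `l`, the map `f` is `C`-close to `n ↦ ±⌊r n⌋ + b`
(read through the identifications of `l` and `l'` with `ℤ`). -/
def StrWith {V W : Type} {Γ : SimpleGraph V} {Λ : SimpleGraph W}
    (f : Raag Γ → Raag Λ) (l : StdGeod Γ) (l' : StdGeod Λ) (C : ℝ) (r : ℚ) : Prop :=
  ∃ ε : ℤ, (ε = 1 ∨ ε = -1) ∧ ∃ b : ℤ,
    ∀ n : ℤ, raagDist Λ (f (l.param n)) (l'.param (ε * ⌊r * (n : ℚ)⌋ + b)) ≤ C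

/-- The stretch factor `str(f, l)` (computed with respect to `l'`) is well-defined
and equals `r`. -/
def HasStr {V W : Type} {Γ : SimpleGraph V} {Λ : SimpleGraph W}
    (f : Raag Γ → Raag Λ) (l : StdGeod Γ) (l' : StdGeod Λ) (r : ℚ) : Prop :=
  ∃ C : ℝ, 0 ≤ C ∧ StrWith f l l' C r

/-- `l` is an `𝓡`-geodesic. -/
def IsRGeod {V : Type} {Γ : SimpleGraph V} (l : StdGeod Γ) : Prop :=
  ∀ (W : Type) [Fintype W] (Λ : SimpleGraph W) (l' : StdGeod Λ)
    (f g : Raag Γ → Raag Λ),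
    IsBasedQI f l l' → IsBasedQI g l l' →
    ∃ r : ℚ, HasStr f l l' r ∧ HasStr g l l' r

/-- The parallelism class `𝒮_l` of a standard geodesic (as a family of subsets). -/
def parClass {V : Type} {Γ : SimpleGraph V} (l : StdGeod Γ) : Set (Set (Raag Γ)) :=
  {S | ∃ k : StdGeod Γ, S = k.carrier ∧ Parallel l k}

/-- The peripheral structure `𝒫_B` on `Raag Γ` determined by a set `B` of vertices. -/
def periph {V : Type} (Γ : SimpleGraph V) (B : Set V) : Set (Set (Set (Raag Γ))) :=
  {F | ∃ l : StdGeod Γ, l.label ∈ B ∧ F = parClass l}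

/-- A `(K, A)`-relative quasi-isometry between spaces with peripheral structures. -/
def IsRelQIWith {X Y : Type*} (K A : ℝ) (dX : X → X → ℝ) (dY : Y → Y → ℝ)
    (PX : Set (Set (Set X))) (PY : Set (Set (Set Y)))
    (f : X → Y) (fs : Set (Set X) → Set (Set Y)) : Prop :=
  IsQIWith K A dX dY f ∧
  Set.BijOn fs PX PY ∧
  ∀ F ∈ PX, (∀ a ∈ F, ∃ b ∈ fs F, HausLE dY (f '' a) b A) ∧
            (∀ b ∈ fs F, ∃ a ∈ F, HausLE dY (f '' a) b A)

/-- The two spaces with peripheral structures are relatively quasi-isometric. -/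
def IsRelQI {X Y : Type*} (dX : X → X → ℝ) (dY : Y → Y → ℝ)
    (PX : Set (Set (Set X))) (PY : Set (Set (Set Y))) : Prop :=
  ∃ (K A : ℝ) (f : X → Y) (fs : Set (Set X) → Set (Set Y)),
    IsRelQIWith K A dX dY PX PY f fs

/-- Left translation of a family of subsets of `Raag Γ`. -/
def translateFam {V : Type} {Γ : SimpleGraph V} (g : Raag Γ) (F : Set (Set (Raag Γ))) :
    Set (Set (Raag Γ)) :=
  (fun a => (fun x => g * x) '' a) '' F

/-- A decoration on `𝒫_B` that is invariant under the left translation action. -/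
def DecorInvariant {V : Type} (Γ : SimpleGraph V) (B : Set V) {O : Type}
    (δ : Set (Set (Raag Γ)) → O) : Prop :=
  ∀ g : Raag Γ, ∀ F ∈ periph Γ B, δ (translateFam g F) = δ F

/-- A decoration-preserving based relative quasi-isometry
`(A(Γ), 𝒫_{BΓ}, δΓ, l) → (A(Λ), 𝒫_{BΛ}, δΛ, l')`. -/
def IsDecorBasedRelQI {V W : Type} (Γ : SimpleGraph V) (Λ : SimpleGraph W)
    (BΓ : Set V) (BΛ : Set W) {O : Type}
    (δΓ : Set (Set (Raag Γ)) → O) (δΛ : Set (Set (Raag Λ)) → O)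
    (l : StdGeod Γ) (l' : StdGeod Λ)
    (f : Raag Γ → Raag Λ) (fs : Set (Set (Raag Γ)) → Set (Set (Raag Λ))) : Prop :=
  (∃ K A : ℝ, IsRelQIWith K A (raagDist Γ) (raagDist Λ) (periph Γ BΓ) (periph Λ BΛ) f fs) ∧
  (∀ F ∈ periph Γ BΓ, δΛ (fs F) = δΓ F) ∧
  FinHaus (raagDist Λ) (f '' l.carrier) l'.carrier

/-- `A(Γ)` is a dovetail RAAG. -/
def Dovetail {V : Type} (Γ : SimpleGraph V) : Prop :=
  ∀ (W : Type) [Fintype W] (Λ : SimpleGraph W) (BΓ : Set V) (BΛ : Set W)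
    (O : Type) (δΓ : Set (Set (Raag Γ)) → O) (δΛ : Set (Set (Raag Λ)) → O),
    DecorInvariant Γ BΓ δΓ → DecorInvariant Λ BΛ δΛ →
    ∀ (l : StdGeod Γ) (l' : StdGeod Λ) (f : Raag Γ → Raag Λ)
      (fs : Set (Set (Raag Γ)) → Set (Set (Raag Λ))),
      IsDecorBasedRelQI Γ Λ BΓ BΛ δΓ δΛ l l' f fs →
      ∀ lam : Set (Set (Raag Γ)) → ℚ,
        (∀ F ∈ periph Γ BΓ, 0 < lam F) →
        (∃ M : ℚ, 1 ≤ M ∧ ∀ F ∈ periph Γ BΓ, 1 / M ≤ lam F ∧ lam F ≤ M) →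
        (∀ F ∈ periph Γ BΓ, ∀ F' ∈ periph Γ BΓ, δΓ F = δΓ F' → lam F = lam F') →
        ∃ C : ℝ, 0 ≤ C ∧
          ∃ (g : Raag Γ → Raag Λ) (gs : Set (Set (Raag Γ)) → Set (Set (Raag Λ))),
            IsDecorBasedRelQI Γ Λ BΓ BΛ δΓ δΛ l l' g gs ∧
            (∀ l2 : StdGeod Γ, l2.label ∈ BΓ → ¬ IsRGeod l2 →
              ∀ l3 : StdGeod Λ, FinHaus (raagDist Λ) (g '' l2.carrier) l3.carrier →
                StrWith g l2 l3 C (lam (parClass l2))) ∧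
            (∀ l2 : StdGeod Γ, l2.label ∈ BΓ → IsRGeod l2 →
              ∀ l3 : StdGeod Λ, FinHaus (raagDist Λ) (g '' l2.carrier) l3.carrier →
                ∃ r : ℚ, StrWith g l2 l3 C r)

/-- The closed star of a vertex, as a vertex set. -/
def starSet {V : Type} (Γ : SimpleGraph V) (x : V) : Set V :=
  insert x {u | Γ.Adj x u}

/-- The link of a vertex, as a vertex set. -/
def lkSet {V : Type} (Γ : SimpleGraph V) (x : V) : Set V := {u | Γ.Adj x u}

/-- The link of `x` inside the induced subgraph on `S`. -/
def lkIn {V : Type} (Γ : SimpleGraph V) (S : Set V) (x : V) : Set V :=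
  {u | u ∈ S ∧ Γ.Adj x u}

/-- `x` is a cut vertex: deleting it (and incident edges) disconnects the graph. -/
def CutVertex {V : Type} (Γ : SimpleGraph V) (x : V) : Prop :=
  ¬ (Γ.induce {u : V | u ≠ x}).Preconnected

/-- The vertex set `S` spans a biconnected subgraph: connected with no cut vertex. -/
def Biconn {V : Type} (Γ : SimpleGraph V) (S : Set V) : Prop :=
  (Γ.induce S).Connected ∧ ∀ x ∈ S, (Γ.induce (S \ {x})).Preconnected

/-- `S` spans a maximal biconnected subgraph. -/
def MaxBiconn {V : Type} (Γ : SimpleGraph V) (S : Set V) : Prop :=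
  Biconn Γ S ∧ ∀ T : Set V, Biconn Γ T → S ⊆ T → S = T

/-- The collection `C₁` of maximal biconnected subgraphs: those containing at least
two cut vertices, or not contained in the star of any cut vertex. -/
def C1 {V : Type} (Γ : SimpleGraph V) : Set (Set V) :=
  {S | MaxBiconn Γ S ∧
    ((∃ x ∈ S, ∃ y ∈ S, x ≠ y ∧ CutVertex Γ x ∧ CutVertex Γ y) ∨
     (∀ x : V, CutVertex Γ x → ¬ S ⊆ starSet Γ x))}

/-- `Γ` is an `n`-clique tree-graded graph. -/
def NCliqueTreeGraded {V : Type} (Γ : SimpleGraph V) (n : ℕ) : Prop :=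
  Γ.Connected ∧
  (∀ x : V, CutVertex Γ x ∨ (∃! u : V, Γ.Adj x u)) ∧
  (∃ x y : V, 3 ≤ Γ.dist x y) ∧
  (∀ S : Set V, MaxBiconn Γ S →
    ((Γ.IsClique S ∧ S.ncard = n ∧ ∀ x ∈ S, CutVertex Γ x) ∨
     (Γ.IsClique S ∧ S.ncard = 2 ∧ ∃! x : V, x ∈ S ∧ CutVertex Γ x)))

/-- The subgroup of `Raag Γ` generated by the vertices in `T`. -/
def subRaag {V : Type} (Γ : SimpleGraph V) (T : Set V) : Subgroup (Raag Γ) :=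
  Subgroup.closure (raagGen Γ '' T)

/-- The word metric on the subgroup generated by `T`, w.r.t. the generators from `T`. -/
def subDist {V : Type} (Γ : SimpleGraph V) (T : Set V) :
    ↥(subRaag Γ T) → ↥(subRaag Γ T) → ℝ :=
  wordDist {x : ↥(subRaag Γ T) | ∃ u ∈ T, (x : Raag Γ) = raagGen Γ u}

/-- The cylinder group `A(star(x))`. -/
def cylGroup {V : Type} (Γ : SimpleGraph V) (x : V) : Subgroup (Raag Γ) :=
  subRaag Γ (starSet Γ x)

/-- The word metric on the cylinder `A(star(x))` w.r.t. the vertices of `star(x)`. -/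
def cylDist {V : Type} (Γ : SimpleGraph V) (x : V) :
    ↥(cylGroup Γ x) → ↥(cylGroup Γ x) → ℝ :=
  subDist Γ (starSet Γ x)

/-- The coset `a⟨x⟩`, as a subset of the cylinder `A(star(x))`. -/
def cylCoset {V : Type} (Γ : SimpleGraph V) (x : V) (a : Raag Γ) :
    Set ↥(cylGroup Γ x) :=
  {g | ∃ n : ℤ, (g : Raag Γ) = a * raagGen Γ x ^ n}

/-- The peripheral structure `𝒫_x` on the cylinder `A(star(x))`: one element for each
coset `g·A(star_{Γ'}(x))` with `Γ' ∈ C₁` containing `x`, namely the family of cosets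
`{g·h·⟨x⟩ : h ∈ A(lk_{Γ'}(x))}`. -/
def cylPeriph {V : Type} (Γ : SimpleGraph V) (x : V) :
    Set (Set (Set ↥(cylGroup Γ x))) :=
  {F | ∃ S ∈ C1 Γ, x ∈ S ∧ ∃ g : Raag Γ, g ∈ cylGroup Γ x ∧
    F = {c | ∃ h ∈ subRaag Γ (lkIn Γ S x), c = cylCoset Γ x (g * h)}}

/-- The factors `A(T) ≤ A(Γ)` and `A(T') ≤ A(Λ)` are quasi-isometric. -/
def FactorQI {V W : Type} (Γ : SimpleGraph V) (Λ : SimpleGraph W)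
    (T : Set V) (T' : Set W) : Prop :=
  ∃ φ : ↥(subRaag Γ T) → ↥(subRaag Λ T'), IsQI (subDist Γ T) (subDist Λ T') φ

/-! ### Auxiliary development for Statement 18 -/

section Aux

open Multiplicative

variable {V : Type} [DecidableEq V] {Γ : SimpleGraph V}

theorem raag_rel {x y : V} (h : Γ.Adj x y) :
    raagGen Γ x * raagGen Γ y = raagGen Γ y * raagGen Γ x := by
  have hr : (FreeGroup.of x * FreeGroup.of y * (FreeGroup.of x)⁻¹ * (FreeGroup.of y)⁻¹ :
      FreeGroup V) ∈ raagRels Γ := ⟨x, y, h, rfl⟩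
  have h1 : PresentedGroup.mk (raagRels Γ)
      (FreeGroup.of x * FreeGroup.of y * (FreeGroup.of x)⁻¹ * (FreeGroup.of y)⁻¹) = 1 :=
    (QuotientGroup.eq_one_iff _).mpr (Subgroup.subset_normalClosure hr)
  have h2 : (open scoped commutatorElement in ⁅raagGen Γ x, raagGen Γ y⁆) = 1 := by
    rw [commutatorElement_def]
    simpa [raagGen, PresentedGroup.of, map_mul, map_inv] using h1
  exact commutatorElement_eq_one_iff_commute.mp h2

/-- In the RAAG of a complete graph, any two elements commute. -/
theorem raag_comm (hΓ : ∀ x y : V, x ≠ y → Γ.Adj x y) (a b : Raag Γ) : a * b = b * a := by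
  have hgen : ∀ x y : V, raagGen Γ x * raagGen Γ y = raagGen Γ y * raagGen Γ x := by
    intro x y
    rcases eq_or_ne x y with rfl | hxy
    · rfl
    · exact raag_rel (hΓ x y hxy)
  have h1 : ∀ x : V, raagGen Γ x * b = b * raagGen Γ x := by
    intro x
    have hmem : b ∈ Subgroup.centralizer {raagGen Γ x} := by
      have htop : Subgroup.closure (Set.range (PresentedGroup.of :
          V → PresentedGroup (raagRels Γ))) = ⊤ := PresentedGroup.closure_range_of _
      have hb : b ∈ Subgroup.closure (Set.range (PresentedGroup.of :
          V → PresentedGroup (raagRels Γ))) := htop ▸ Subgroup.mem_top b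
      refine Subgroup.closure_le (Subgroup.centralizer {raagGen Γ x}) |>.mpr ?_ hb
      rintro _ ⟨y, rfl⟩
      simp only [SetLike.mem_coe, Subgroup.mem_centralizer_iff, Set.mem_singleton_iff]
      rintro _ rfl
      exact hgen x y
    exact Subgroup.mem_centralizer_iff.mp hmem _ rfl
  have hmem : a ∈ Subgroup.centralizer {b} := by
    have htop : Subgroup.closure (Set.range (PresentedGroup.of :
        V → PresentedGroup (raagRels Γ))) = ⊤ := PresentedGroup.closure_range_of _
    have ha : a ∈ Subgroup.closure (Set.range (PresentedGroup.of :
        V → PresentedGroup (raagRels Γ))) := htop ▸ Subgroup.mem_top a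
    refine Subgroup.closure_le (Subgroup.centralizer {b}) |>.mpr ?_ ha
    rintro _ ⟨y, rfl⟩
    simp only [SetLike.mem_coe, Subgroup.mem_centralizer_iff, Set.mem_singleton_iff]
    rintro _ rfl
    exact (h1 y).symm
  exact (Subgroup.mem_centralizer_iff.mp hmem _ rfl).symm

/-- A `CommGroup` structure on the RAAG of a complete graph. -/
@[reducible]
def raagCommGroup (hΓ : ∀ x y : V, x ≠ y → Γ.Adj x y) : CommGroup (Raag Γ) :=
  { (inferInstance : Group (Raag Γ)) with mul_comm := raag_comm hΓ }

/-- The abelianization map to `ℤ^V`. -/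
def theta (Γ : SimpleGraph V) : Raag Γ →* Multiplicative (V → ℤ) :=
  PresentedGroup.toGroup (f := fun x => Multiplicative.ofAdd (Pi.single x 1)) (by
    rintro r ⟨x, y, -, rfl⟩
    simp only [map_mul, map_inv, FreeGroup.lift_apply_of]
    rw [← commutatorElement_def]
    exact commutatorElement_eq_one_iff_commute.mpr (mul_comm _ _))

@[simp] theorem theta_gen (x : V) :
    theta Γ (raagGen Γ x) = Multiplicative.ofAdd (Pi.single x 1) :=
  PresentedGroup.toGroup.of _

set_option linter.unusedSectionVars false

section CanForm

variable [Fintype V]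

/-- Canonical representative of an exponent vector. -/
def rcan (Γ : SimpleGraph V) [DecidableEq V] [Fintype V]
    (hΓ : ∀ x y : V, x ≠ y → Γ.Adj x y) (c : V → ℤ) : Raag Γ :=
  letI := raagCommGroup hΓ
  ∏ x : V, raagGen Γ x ^ c x

variable (hΓ : ∀ x y : V, x ≠ y → Γ.Adj x y)

theorem theta_rcan (c : V → ℤ) : theta Γ (rcan Γ hΓ c) = Multiplicative.ofAdd c := by
  letI := raagCommGroup hΓ
  rw [rcan, map_prod]
  have : ∀ x : V, theta Γ (raagGen Γ x ^ c x) = Multiplicative.ofAdd (Pi.single x (c x)) := by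
    intro x
    rw [map_zpow, theta_gen]
    apply Multiplicative.toAdd.injective
    rw [toAdd_zpow]
    funext y
    rcases eq_or_ne y x with rfl | hy
    · simp
    · simp [Pi.single_eq_of_ne hy]
  rw [Finset.prod_congr rfl fun x _ => this x]
  apply Multiplicative.toAdd.injective
  rw [toAdd_prod]
  simp only [toAdd_ofAdd]
  exact Finset.univ_sum_single c

theorem rcan_add (c d : V → ℤ) : rcan Γ hΓ (c + d) = rcan Γ hΓ c * rcan Γ hΓ d := by
  letI := raagCommGroup hΓ
  rw [rcan, rcan, rcan, ← Finset.prod_mul_distrib]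
  exact Finset.prod_congr rfl fun x _ => by rw [Pi.add_apply, zpow_add]

theorem rcan_zero : rcan Γ hΓ 0 = 1 := by
  letI := raagCommGroup hΓ
  rw [rcan]
  exact Finset.prod_eq_one fun x _ => by simp

theorem rcan_single (x : V) : rcan Γ hΓ (Pi.single x 1) = raagGen Γ x := by
  letI := raagCommGroup hΓ
  rw [rcan]
  rw [Fintype.prod_eq_single x (fun y hy => by simp [Pi.single_eq_of_ne hy])]
  simp

theorem rcan_theta (g : Raag Γ) : rcan Γ hΓ (theta Γ g).toAdd = g := by
  letI := raagCommGroup hΓ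
  let H : Subgroup (Raag Γ) :=
    { carrier := {g | rcan Γ hΓ (theta Γ g).toAdd = g}
      one_mem' := by simp [rcan_zero hΓ]
      mul_mem' := by
        rintro a b (ha : _ = _) (hb : _ = _)
        show rcan Γ hΓ _ = _
        rw [map_mul, toAdd_mul, rcan_add hΓ, ha, hb]
      inv_mem' := by
        rintro a (ha : _ = _)
        show rcan Γ hΓ _ = _
        have : rcan Γ hΓ (theta Γ a).toAdd * rcan Γ hΓ (theta Γ a⁻¹).toAdd = 1 := by
          rw [← rcan_add hΓ, map_inv, toAdd_inv]
          simp [rcan_zero hΓ]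
        rw [ha] at this
        exact (inv_eq_of_mul_eq_one_right this).symm }
  exact PresentedGroup.generated_by _ H
    (fun j => by
      show rcan Γ hΓ (theta Γ (raagGen Γ j)).toAdd = raagGen Γ j
      rw [theta_gen]
      simpa using rcan_single hΓ j) g

theorem theta_injective (hΓ : ∀ x y : V, x ≠ y → Γ.Adj x y) :
    Function.Injective (theta Γ) := by
  intro a b hab
  rw [← rcan_theta hΓ a, ← rcan_theta hΓ b, hab]

end CanForm

section L1

variable [Fintype V]

/-- The `ℓ¹` distance on `ℤ^V`, as a real number. -/
def l1 {V : Type} [Fintype V] (c d : V → ℤ) : ℝ := ∑ x, |((c x - d x : ℤ) : ℝ)|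

theorem l1_nonneg (c d : V → ℤ) : 0 ≤ l1 c d :=
  Finset.sum_nonneg fun x _ => abs_nonneg _

theorem l1_self (c : V → ℤ) : l1 c c = 0 := by simp [l1]

theorem l1_comm (c d : V → ℤ) : l1 c d = l1 d c := by
  unfold l1
  exact Finset.sum_congr rfl fun x _ => by rw [← abs_neg]; push_cast; ring_nf

theorem l1_triangle (c d e : V → ℤ) : l1 c e ≤ l1 c d + l1 d e := by
  unfold l1
  rw [← Finset.sum_add_distrib]
  refine Finset.sum_le_sum fun x _ => ?_
  have : ((c x - e x : ℤ) : ℝ) = ((c x - d x : ℤ) : ℝ) + ((d x - e x : ℤ) : ℝ) := by push_cast; ring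
  rw [this]
  exact abs_add_le _ _

theorem coord_le_l1 (c d : V → ℤ) (x : V) : |((c x - d x : ℤ) : ℝ)| ≤ l1 c d := by
  unfold l1
  exact Finset.single_le_sum (f := fun y => |((c y - d y : ℤ) : ℝ)|)
    (fun y _ => abs_nonneg _) (Finset.mem_univ x)

theorem one_le_l1 {c d : V → ℤ} (h : c ≠ d) : 1 ≤ l1 c d := by
  obtain ⟨x, hx⟩ := Function.ne_iff.mp h
  refine le_trans ?_ (coord_le_l1 c d x)
  have : c x - d x ≠ 0 := sub_ne_zero.mpr hx
  have h1 : (1 : ℤ) ≤ |c x - d x| := Int.one_le_abs this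
  have h2 : ((1 : ℤ) : ℝ) ≤ ((|c x - d x| : ℤ) : ℝ) := by exact_mod_cast h1
  rw [Int.cast_abs] at h2
  simpa using h2

theorem l1_eq_zero {c d : V → ℤ} (h : l1 c d = 0) : c = d := by
  by_contra hne
  have := one_le_l1 (V := V) hne
  rw [h] at this; linarith

theorem l1_zero_right (c : V → ℤ) : l1 c 0 = ∑ x, |((c x : ℤ) : ℝ)| := by
  unfold l1; simp

theorem l1_sub_zero (c d : V → ℤ) : l1 c d = l1 (c - d) 0 := by
  unfold l1
  exact Finset.sum_congr rfl fun x _ => by push_cast [Pi.sub_apply, Pi.zero_apply]; ring_nf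

theorem l1_add_left (e c d : V → ℤ) : l1 (e + c) (e + d) = l1 c d := by
  unfold l1
  exact Finset.sum_congr rfl fun x _ => by push_cast [Pi.add_apply]; ring_nf

theorem l1_single [DecidableEq V] (u : V) (k : ℤ) : l1 (Pi.single u k) 0 = |(k : ℝ)| := by
  rw [l1_zero_right]
  rw [Fintype.sum_eq_single u (fun y hy => by simp [Pi.single_eq_of_ne hy])]
  simp

end L1

section Words

variable [Fintype V]

theorem l1_add_le (u v : V → ℤ) : l1 (u + v) 0 ≤ l1 u 0 + l1 v 0 := by
  have h1 := l1_triangle (u + v) v 0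
  have h2 : l1 (u + v) v = l1 u 0 := by
    rw [l1_sub_zero (u + v) v, add_sub_cancel_right]
  have h3 : l1 v 0 = l1 v 0 := rfl
  linarith [h1, h2.le, h2.ge]

/-- An explicit word representing the exponent vector `c`. -/
def wordFor (Γ : SimpleGraph V) [DecidableEq V] [Fintype V] (c : V → ℤ) : List (Raag Γ) :=
  Finset.univ.toList.flatMap fun x =>
    List.replicate (c x).natAbs (if 0 ≤ c x then raagGen Γ x else (raagGen Γ x)⁻¹)

theorem wordFor_mem (c : V → ℤ) :
    ∀ a ∈ wordFor Γ c, a ∈ Set.range (raagGen Γ) ∨ a⁻¹ ∈ Set.range (raagGen Γ) := by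
  intro a ha
  rw [wordFor, List.mem_flatMap] at ha
  obtain ⟨x, -, ha⟩ := ha
  rw [List.eq_of_mem_replicate ha]
  split
  · exact Or.inl ⟨x, rfl⟩
  · exact Or.inr ⟨x, (inv_inv (raagGen Γ x)).symm⟩

theorem wordFor_length (c : V → ℤ) : (wordFor Γ c).length = ∑ x, (c x).natAbs := by
  rw [wordFor, List.length_flatMap]
  have : ((List.length ∘ fun x => List.replicate (c x).natAbs
      (if 0 ≤ c x then raagGen Γ x else (raagGen Γ x)⁻¹))) = fun x => (c x).natAbs := by
    funext x; simp
  simp only [List.length_replicate]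
  exact Finset.sum_map_toList _ _

theorem wordFor_prod (hΓ : ∀ x y : V, x ≠ y → Γ.Adj x y) (c : V → ℤ) :
    (wordFor Γ c).prod = rcan Γ hΓ c := by
  letI := raagCommGroup hΓ
  have key : ∀ x : V, (List.replicate (c x).natAbs
      (if 0 ≤ c x then raagGen Γ x else (raagGen Γ x)⁻¹)).prod = raagGen Γ x ^ c x := by
    intro x
    rw [List.prod_replicate]
    split
    · rename_i hx; rw [← zpow_natCast, Int.natAbs_of_nonneg hx]
    · rename_i hx
      rw [inv_pow, ← zpow_natCast, ← zpow_neg]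
      congr 1
      omega
  rw [wordFor, List.flatMap, List.prod_flatten, List.map_map]
  have : (List.prod ∘ fun x => List.replicate (c x).natAbs
      (if 0 ≤ c x then raagGen Γ x else (raagGen Γ x)⁻¹)) = fun x => raagGen Γ x ^ c x :=
    funext key
  rw [this, Finset.prod_map_toList]
  rfl

theorem theta_word_le (L : List (Raag Γ))
    (hL : ∀ a ∈ L, a ∈ Set.range (raagGen Γ) ∨ a⁻¹ ∈ Set.range (raagGen Γ)) :
    l1 (theta Γ L.prod).toAdd 0 ≤ L.length := by
  induction L with
  | nil => simp [l1_self]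
  | cons a L ih =>
    have hgen : l1 (theta Γ a).toAdd 0 ≤ 1 := by
      rcases hL a List.mem_cons_self with ⟨u, rfl⟩ | ⟨u, hu⟩
      · rw [theta_gen, toAdd_ofAdd, l1_single]; simp
      · have ha : a = (raagGen Γ u)⁻¹ := by rw [hu, inv_inv]
        rw [ha, map_inv, toAdd_inv, theta_gen, toAdd_ofAdd]
        have : -Pi.single u (1 : ℤ) = (Pi.single u (-1 : ℤ) : V → ℤ) := by
          funext y
          rcases eq_or_ne y u with rfl | hy
          · simp
          · simp [Pi.single_eq_of_ne hy]
        rw [this, l1_single]; simp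
    have ih' := ih fun x hx => hL x (List.mem_cons_of_mem a hx)
    rw [List.prod_cons, map_mul, toAdd_mul]
    have htr := l1_add_le (theta Γ a).toAdd (theta Γ L.prod).toAdd
    rw [List.length_cons]
    push_cast
    linarith

theorem raagDist_eq (hΓ : ∀ x y : V, x ≠ y → Γ.Adj x y) (g h : Raag Γ) :
    raagDist Γ g h = l1 (theta Γ g).toAdd (theta Γ h).toAdd := by
  set c : V → ℤ := (theta Γ h).toAdd - (theta Γ g).toAdd with hc
  have hceq : c = (theta Γ (g⁻¹ * h)).toAdd := by
    rw [map_mul, map_inv, toAdd_mul, toAdd_inv, hc, sub_eq_neg_add]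
  have hprod : (wordFor Γ c).prod = g⁻¹ * h := by
    rw [wordFor_prod hΓ, hceq, rcan_theta hΓ]
  have hgprod : g * (wordFor Γ c).prod = h := by rw [hprod, mul_inv_cancel_left]
  have hlen : ((wordFor Γ c).length : ℝ) = l1 (theta Γ g).toAdd (theta Γ h).toAdd := by
    rw [wordFor_length, l1_comm, l1_sub_zero, ← hc, l1_zero_right]
    push_cast [Nat.cast_natAbs]
    rfl
  have hl1eq : l1 (theta Γ g).toAdd (theta Γ h).toAdd = l1 c 0 := by
    rw [l1_comm, l1_sub_zero, ← hc]
  unfold raagDist wordDist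
  apply le_antisymm
  · exact csInf_le ⟨0, by rintro r ⟨l, -, rfl⟩; positivity⟩
      ⟨wordFor Γ c, ⟨wordFor_mem c, hgprod⟩, hlen⟩
  · refine le_csInf ⟨_, ⟨wordFor Γ c, ⟨wordFor_mem c, hgprod⟩, rfl⟩⟩ ?_
    rintro r ⟨L, ⟨hmem, hLprod⟩, rfl⟩
    have hLp : L.prod = g⁻¹ * h := by rw [← hLprod, inv_mul_cancel_left]
    have h2 := theta_word_le L hmem
    rw [hLp, ← hceq] at h2
    rw [hl1eq]
    have : l1 c 0 ≤ l1 c 0 := le_refl _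
    calc l1 c 0 = l1 c 0 := rfl
      _ ≤ L.length := h2

theorem raagDist_nonneg' (hΓ : ∀ x y : V, x ≠ y → Γ.Adj x y) (g h : Raag Γ) :
    0 ≤ raagDist Γ g h := by rw [raagDist_eq hΓ]; exact l1_nonneg _ _

theorem raagDist_self (hΓ : ∀ x y : V, x ≠ y → Γ.Adj x y) (g : Raag Γ) :
    raagDist Γ g g = 0 := by rw [raagDist_eq hΓ]; exact l1_self _

theorem raagDist_symm (hΓ : ∀ x y : V, x ≠ y → Γ.Adj x y) (g h : Raag Γ) :
    raagDist Γ g h = raagDist Γ h g := by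
  rw [raagDist_eq hΓ, raagDist_eq hΓ]; exact l1_comm _ _

theorem raagDist_triangle (hΓ : ∀ x y : V, x ≠ y → Γ.Adj x y) (g h k : Raag Γ) :
    raagDist Γ g k ≤ raagDist Γ g h + raagDist Γ h k := by
  rw [raagDist_eq hΓ, raagDist_eq hΓ, raagDist_eq hΓ]; exact l1_triangle _ _ _

theorem raagDist_eq_zero_iff (hΓ : ∀ x y : V, x ≠ y → Γ.Adj x y) {g h : Raag Γ} :
    raagDist Γ g h = 0 ↔ g = h := by
  rw [raagDist_eq hΓ]
  constructor
  · intro h0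
    exact theta_injective hΓ (Multiplicative.toAdd.injective (l1_eq_zero h0))
  · rintro rfl; exact l1_self _

end Words

section Geod

variable [Fintype V]

theorem finHaus_refl (hΓ : ∀ x y : V, x ≠ y → Γ.Adj x y) (S : Set (Raag Γ)) :
    FinHaus (raagDist Γ) S S :=
  ⟨0, le_refl 0,
    fun s hs => ⟨s, hs, by rw [raagDist_self hΓ]⟩,
    fun s hs => ⟨s, hs, by rw [raagDist_self hΓ]⟩⟩

theorem finHaus_symm (hΓ : ∀ x y : V, x ≠ y → Γ.Adj x y) {S T : Set (Raag Γ)}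
    (h : FinHaus (raagDist Γ) S T) : FinHaus (raagDist Γ) T S := by
  obtain ⟨r, hr, h1, h2⟩ := h
  refine ⟨r, hr, fun t ht => ?_, fun s hs => ?_⟩
  · obtain ⟨s, hs, hd⟩ := h2 t ht
    exact ⟨s, hs, by rw [raagDist_symm hΓ]; exact hd⟩
  · obtain ⟨t, ht, hd⟩ := h1 s hs
    exact ⟨t, ht, by rw [raagDist_symm hΓ]; exact hd⟩

theorem finHaus_trans (hΓ : ∀ x y : V, x ≠ y → Γ.Adj x y) {S T U : Set (Raag Γ)}
    (h : FinHaus (raagDist Γ) S T) (h' : FinHaus (raagDist Γ) T U) :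
    FinHaus (raagDist Γ) S U := by
  obtain ⟨r, hr, h1, h2⟩ := h
  obtain ⟨r', hr', h1', h2'⟩ := h'
  refine ⟨r + r', by linarith, fun s hs => ?_, fun u hu => ?_⟩
  · obtain ⟨t, ht, hd⟩ := h1 s hs
    obtain ⟨u, hu, hd'⟩ := h1' t ht
    exact ⟨u, hu, le_trans (raagDist_triangle hΓ s t u) (by linarith)⟩
  · obtain ⟨t, ht, hd'⟩ := h2' u hu
    obtain ⟨s, hs, hd⟩ := h2 t ht
    exact ⟨s, hs, le_trans (raagDist_triangle hΓ s t u) (by linarith)⟩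

theorem theta_param (l : StdGeod Γ) (n : ℤ) :
    (theta Γ (l.param n)).toAdd = (theta Γ l.base).toAdd + Pi.single l.label n := by
  rw [StdGeod.param, map_mul, toAdd_mul, map_zpow, theta_gen, toAdd_zpow]
  congr 1
  funext y
  rcases eq_or_ne y l.label with rfl | hy
  · simp
  · simp [Pi.single_eq_of_ne hy]

theorem parallel_of_label_eq (hΓ : ∀ x y : V, x ≠ y → Γ.Adj x y) {l k : StdGeod Γ}
    (h : l.label = k.label) : Parallel l k := by
  refine ⟨raagDist Γ l.base k.base, raagDist_nonneg' hΓ _ _, ?_, ?_⟩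
  · rintro _ ⟨n, rfl⟩
    refine ⟨k.param n, ⟨n, rfl⟩, ?_⟩
    rw [raagDist_eq hΓ, theta_param, theta_param, ← h]
    rw [add_comm ((theta Γ l.base).toAdd) _, add_comm ((theta Γ k.base).toAdd) _,
      l1_add_left, ← raagDist_eq hΓ]
  · rintro _ ⟨n, rfl⟩
    refine ⟨l.param n, ⟨n, rfl⟩, ?_⟩
    rw [raagDist_eq hΓ, theta_param, theta_param, ← h]
    rw [add_comm ((theta Γ l.base).toAdd) _, add_comm ((theta Γ k.base).toAdd) _,
      l1_add_left, ← raagDist_eq hΓ]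

theorem label_eq_of_finHaus (hΓ : ∀ x y : V, x ≠ y → Γ.Adj x y) {l k : StdGeod Γ}
    (h : FinHaus (raagDist Γ) l.carrier k.carrier) : l.label = k.label := by
  by_contra hne
  obtain ⟨r, hr, h1, -⟩ := h
  set a : ℤ := (theta Γ l.base).toAdd l.label - (theta Γ k.base).toAdd l.label with ha
  set n : ℤ := a.natAbs + ⌈r⌉₊ + 1 with hn
  obtain ⟨t, ⟨m, rfl⟩, hd⟩ := h1 (l.param n) ⟨n, rfl⟩
  rw [raagDist_eq hΓ, theta_param, theta_param] at hd
  have hcoord := coord_le_l1 ((theta Γ l.base).toAdd + Pi.single l.label n)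
    ((theta Γ k.base).toAdd + Pi.single k.label m) l.label
  have hsingle : (Pi.single k.label m : V → ℤ) l.label = 0 := by
    rw [Pi.single_eq_of_ne hne]
  have hval : (Multiplicative.toAdd (theta Γ l.base) + Pi.single l.label n : V → ℤ) l.label -
      (Multiplicative.toAdd (theta Γ k.base) + Pi.single k.label m : V → ℤ) l.label = n + a := by
    simp only [Pi.add_apply, Pi.single_eq_same, hsingle, ha]
    ring
  rw [hval] at hcoord
  have hint : (⌈r⌉₊ + 1 : ℤ) ≤ |n + a| := by
    have hna : (⌈r⌉₊ + 1 : ℤ) ≤ n + a := by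
      have : n = a.natAbs + ⌈r⌉₊ + 1 := hn
      omega
    exact le_trans hna (le_abs_self _)
  have hcast : ((⌈r⌉₊ + 1 : ℤ) : ℝ) ≤ |((n + a : ℤ) : ℝ)| := by
    rw [← Int.cast_abs]
    exact_mod_cast hint
  have hceil : r ≤ (⌈r⌉₊ : ℝ) := Nat.le_ceil r
  have hle : |((n + a : ℤ) : ℝ)| ≤ r := le_trans hcoord hd
  push_cast at hcast hle
  linarith

theorem parallel_iff_label (hΓ : ∀ x y : V, x ≠ y → Γ.Adj x y) {l k : StdGeod Γ} :
    Parallel l k ↔ l.label = k.label :=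
  ⟨fun h => label_eq_of_finHaus hΓ h, fun h => parallel_of_label_eq hΓ h⟩

theorem label_eq_of_carrier_eq (hΓ : ∀ x y : V, x ≠ y → Γ.Adj x y) {l k : StdGeod Γ}
    (h : l.carrier = k.carrier) : l.label = k.label :=
  label_eq_of_finHaus hΓ (h ▸ finHaus_refl hΓ l.carrier)

theorem parClass_eq_iff (hΓ : ∀ x y : V, x ≠ y → Γ.Adj x y) {l k : StdGeod Γ} :
    parClass l = parClass k ↔ l.label = k.label := by
  constructor
  · intro h
    have hmem : l.carrier ∈ parClass l := ⟨l, rfl, parallel_of_label_eq hΓ rfl⟩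
    rw [h] at hmem
    obtain ⟨m, hcar, hpar⟩ := hmem
    have h1 : l.label = m.label := label_eq_of_carrier_eq hΓ hcar
    have h2 : k.label = m.label := (parallel_iff_label hΓ).mp hpar
    rw [h1, h2]
  · intro h
    ext S
    constructor
    · rintro ⟨m, rfl, hpar⟩
      exact ⟨m, rfl, parallel_of_label_eq hΓ (h ▸ (parallel_iff_label hΓ).mp hpar)⟩
    · rintro ⟨m, rfl, hpar⟩
      exact ⟨m, rfl, parallel_of_label_eq hΓ (h.trans ((parallel_iff_label hΓ).mp hpar))⟩

theorem parClass_mem_periph (hΓ : ∀ x y : V, x ≠ y → Γ.Adj x y) {B : Set V} {u : V}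
    (hu : u ∈ B) : parClass (⟨1, u⟩ : StdGeod Γ) ∈ periph Γ B :=
  ⟨⟨1, u⟩, hu, rfl⟩

theorem periph_mem_iff (hΓ : ∀ x y : V, x ≠ y → Γ.Adj x y) {B : Set V}
    {F : Set (Set (Raag Γ))} (hF : F ∈ periph Γ B) :
    ∃ u ∈ B, F = parClass (⟨1, u⟩ : StdGeod Γ) := by
  obtain ⟨l, hl, rfl⟩ := hF
  exact ⟨l.label, hl, (parClass_eq_iff hΓ).mpr rfl⟩

end Geod

section Counting

theorem card_le_count {V W : Type} [Fintype V] [Fintype W] [DecidableEq V] [DecidableEq W]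
    (F : (V → ℤ) → (W → ℤ)) (K A B : ℝ)
    (hK : 1 ≤ K) (hA : 0 ≤ A) (hB : 0 ≤ B)
    (hup : ∀ x y, l1 (F x) (F y) ≤ K * l1 x y + A)
    (hinj : ∀ x y, F x = F y → l1 x y ≤ B) :
    Fintype.card V ≤ Fintype.card W := by
  by_contra hlt
  push_neg at hlt
  set n := Fintype.card V with hncard
  set m := Fintype.card W with hmcard
  set s : ℕ := ⌈B⌉₊ + 1 with hs
  have hs1 : 1 ≤ s := Nat.le_add_left 1 _
  have hsB : B < (s : ℝ) := lt_of_le_of_lt (Nat.le_ceil B) (by rw [hs]; push_cast; linarith)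
  set E : ℝ := 2 * K * (n + 1) * (s + 1) + 2 * A + 3 with hE
  have hE1 : 1 ≤ E := by
    have : (0:ℝ) ≤ 2 * K * (n + 1) * (s + 1) := by positivity
    linarith
  have key : ∀ R : ℕ, ((2 * R + 1 : ℕ) : ℝ) ^ n ≤ (E * ((2 * R + 1 : ℕ) : ℝ)) ^ m := by
    intro R
    set P : Finset (V → ℤ) := Finset.Icc (fun _ : V => -(R : ℤ)) (fun _ => (R : ℤ)) with hP
    set g : (V → ℤ) → (W → ℤ) := fun b => F (fun x => (s : ℤ) * b x) with hg
    have hCreal : (0:ℝ) ≤ K * (n * s * R) + A := by positivity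
    set R' : ℤ := ⌈K * ((n : ℝ) * s * R) + A⌉ with hR'
    have hR'0 : 0 ≤ R' := Int.ceil_nonneg hCreal
    set Q : Finset (W → ℤ) := Finset.Icc (fun j => F 0 j - R') (fun j => F 0 j + R') with hQ
    have hmaps : ∀ b ∈ P, g b ∈ Q := by
      intro b hb
      rw [hP, Finset.mem_Icc] at hb
      have hbd : ∀ x, |b x| ≤ (R : ℤ) := by
        intro x
        rw [abs_le]
        exact ⟨hb.1 x, hb.2 x⟩
      have hl1 : l1 (fun x => (s : ℤ) * b x) 0 ≤ (n : ℝ) * s * R := by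
        rw [l1_zero_right]
        have : ∀ x : V, |(((s : ℤ) * b x : ℤ) : ℝ)| ≤ (s : ℝ) * R := by
          intro x
          have h1 : |(s : ℤ) * b x| ≤ (s : ℤ) * R := by
            rw [abs_mul, abs_of_nonneg (by positivity : (0:ℤ) ≤ (s:ℤ))]
            exact mul_le_mul_of_nonneg_left (hbd x) (by positivity)
          calc |(((s : ℤ) * b x : ℤ) : ℝ)| = ((|(s : ℤ) * b x| : ℤ) : ℝ) := by
                rw [Int.cast_abs]
            _ ≤ (((s : ℤ) * R : ℤ) : ℝ) := by exact_mod_cast h1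
            _ = (s : ℝ) * R := by push_cast; ring
        calc ∑ x : V, |(((fun x => (s : ℤ) * b x) x : ℤ) : ℝ)| ≤ ∑ _x : V, (s : ℝ) * R :=
              Finset.sum_le_sum fun x _ => this x
          _ = (n : ℝ) * s * R := by rw [Finset.sum_const, Finset.card_univ, ← hncard]; ring
      have hdist : l1 (g b) (F 0) ≤ K * ((n : ℝ) * s * R) + A := by
        have := hup (fun x => (s : ℤ) * b x) 0
        refine le_trans this ?_
        have := mul_le_mul_of_nonneg_left hl1 (by linarith : (0:ℝ) ≤ K)
        linarith
      rw [hQ, Finset.mem_Icc]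
      constructor <;> intro j
      · show F 0 j - R' ≤ g b j
        have hc := coord_le_l1 (g b) (F 0) j
        have : |((g b j - F 0 j : ℤ) : ℝ)| ≤ (R' : ℝ) :=
          le_trans hc (le_trans hdist (Int.le_ceil _))
        rw [← Int.cast_abs] at this
        have hz : |g b j - F 0 j| ≤ R' := by exact_mod_cast this
        have := (abs_le.mp hz).1
        linarith
      · show g b j ≤ F 0 j + R'
        have hc := coord_le_l1 (g b) (F 0) j
        have : |((g b j - F 0 j : ℤ) : ℝ)| ≤ (R' : ℝ) :=
          le_trans hc (le_trans hdist (Int.le_ceil _))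
        rw [← Int.cast_abs] at this
        have hz : |g b j - F 0 j| ≤ R' := by exact_mod_cast this
        have := (abs_le.mp hz).2
        linarith
    have hinjon : Set.InjOn g P := by
      intro b hb b' hb' hgb
      by_contra hne
      obtain ⟨x, hx⟩ := Function.ne_iff.mp hne
      have h1 : l1 (fun x => (s : ℤ) * b x) (fun x => (s : ℤ) * b' x) ≤ B := hinj _ _ hgb
      have h2 := coord_le_l1 (fun x => (s : ℤ) * b x) (fun x => (s : ℤ) * b' x) x
      have h3 : (s : ℤ) ≤ |(s : ℤ) * b x - (s : ℤ) * b' x| := by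
        have : (s : ℤ) * b x - (s : ℤ) * b' x = (s : ℤ) * (b x - b' x) := by ring
        rw [this, abs_mul, abs_of_nonneg (by positivity : (0:ℤ) ≤ (s:ℤ))]
        have : 1 ≤ |b x - b' x| := Int.one_le_abs (sub_ne_zero.mpr hx)
        nlinarith [this]
      have h4 : ((s : ℤ) : ℝ) ≤ |(((s : ℤ) * b x - (s : ℤ) * b' x : ℤ) : ℝ)| := by
        rw [← Int.cast_abs]
        exact_mod_cast h3
      have : ((s : ℤ) : ℝ) ≤ B := le_trans h4 (le_trans h2 h1)
      push_cast at this
      linarith [Nat.le_ceil B]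
    have hcard := Finset.card_le_card_of_injOn g hmaps hinjon
    have hcardP : P.card = (2 * R + 1) ^ n := by
      rw [hP, Pi.card_Icc]
      have : ∀ i : V, (Finset.Icc (-(R : ℤ)) (R : ℤ)).card = 2 * R + 1 := by
        intro i
        rw [Int.card_Icc]
        omega
      rw [Finset.prod_congr rfl fun i _ => this i, Finset.prod_const, Finset.card_univ]
    have hcardQ : Q.card = (2 * R' + 1).toNat ^ m := by
      rw [hQ, Pi.card_Icc]
      have : ∀ j : W, (Finset.Icc (F 0 j - R') (F 0 j + R')).card = (2 * R' + 1).toNat := by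
        intro j
        rw [Int.card_Icc]
        congr 1
        ring
      rw [Finset.prod_congr rfl fun j _ => this j, Finset.prod_const, Finset.card_univ]
    have hnat : (2 * R + 1) ^ n ≤ (2 * R' + 1).toNat ^ m := by
      rw [← hcardP, ← hcardQ]; exact hcard
    have hreal : ((2 * R + 1 : ℕ) : ℝ) ^ n ≤ (((2 * R' + 1).toNat : ℕ) : ℝ) ^ m := by
      exact_mod_cast hnat
    refine le_trans hreal (pow_le_pow_left₀ (by positivity) ?_ m)
    have h1 : (((2 * R' + 1).toNat : ℕ) : ℝ) = ((2 * R' + 1 : ℤ) : ℝ) := by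
      exact_mod_cast Int.toNat_of_nonneg (show (0:ℤ) ≤ 2 * R' + 1 by omega)
    rw [h1]
    have h2 : ((R' : ℤ) : ℝ) ≤ K * ((n : ℝ) * s * R) + A + 1 := by
      rw [hR']
      exact le_of_lt (Int.ceil_lt_add_one _)
    push_cast
    have hR0 : (0 : ℝ) ≤ R := Nat.cast_nonneg R
    have hs0 : (1 : ℝ) ≤ s := by exact_mod_cast hs1
    have hn0 : (0 : ℝ) ≤ n := Nat.cast_nonneg n
    rw [hE]
    nlinarith [mul_nonneg (mul_nonneg (by linarith : (0:ℝ) ≤ K) (by linarith : (0:ℝ) ≤ (n:ℝ)+1)) (by linarith : (0:ℝ) ≤ (s:ℝ)+1), mul_nonneg hR0 (by linarith : (0:ℝ) ≤ K), mul_nonneg (mul_nonneg hR0 (by linarith : (0:ℝ) ≤ K)) hn0, mul_nonneg (mul_nonneg (mul_nonneg hR0 (by linarith : (0:ℝ) ≤ K)) hn0) (by linarith : (0:ℝ) ≤ (s:ℝ))]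
  -- derive contradiction
  set R : ℕ := ⌈E ^ m⌉₊ with hR
  have h1 := key R
  set t : ℝ := ((2 * R + 1 : ℕ) : ℝ) with ht
  have ht1 : 1 ≤ t := by rw [ht]; push_cast; linarith [Nat.cast_nonneg (α := ℝ) R]
  have ht0 : 0 < t := by linarith
  have hmn : m < n := hlt
  have hEt : (E * t) ^ m = E ^ m * t ^ m := mul_pow E t m
  have htn : t ^ n = t ^ m * t ^ (n - m) := by
    rw [← pow_add]
    congr 1
    omega
  rw [hEt, htn] at h1
  have htm : 0 < t ^ m := pow_pos ht0 m
  have h2 : t ^ (n - m) ≤ E ^ m := by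
    have := (mul_le_mul_iff_right₀ htm).mp (by linarith [h1] : t ^ m * t ^ (n - m) ≤ t ^ m * E ^ m)
    exact this
  have h3 : t ≤ t ^ (n - m) := le_self_pow₀ ht1 (by omega)
  have h4 : t ≤ E ^ m := le_trans h3 h2
  have h5 : E ^ m ≤ (R : ℝ) := Nat.le_ceil (E ^ m)
  rw [ht] at h4
  push_cast at h4
  linarith

end Counting

section QITransfer

variable {W : Type} [Fintype V] [Fintype W] [DecidableEq W] {Λ : SimpleGraph W}

theorem card_eq_of_qi (hΓ : ∀ x y : V, x ≠ y → Γ.Adj x y)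
    (hΛ : ∀ x y : W, x ≠ y → Λ.Adj x y)
    (f : Raag Γ → Raag Λ) (K A : ℝ)
    (hqi : IsQIWith K A (raagDist Γ) (raagDist Λ) f) :
    Fintype.card V = Fintype.card W := by
  obtain ⟨hK, hA, hbd, hsurj⟩ := hqi
  have hK0 : (0:ℝ) < K := lt_of_lt_of_le zero_lt_one hK
  have hdistΓ : ∀ c d : V → ℤ, raagDist Γ (rcan Γ hΓ c) (rcan Γ hΓ d) = l1 c d := by
    intro c d
    rw [raagDist_eq hΓ, theta_rcan hΓ, theta_rcan hΓ, toAdd_ofAdd, toAdd_ofAdd]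
  set F : (V → ℤ) → (W → ℤ) := fun c => (theta Λ (f (rcan Γ hΓ c))).toAdd with hF
  have hFdist : ∀ c d, l1 (F c) (F d) = raagDist Λ (f (rcan Γ hΓ c)) (f (rcan Γ hΓ d)) := by
    intro c d; rw [raagDist_eq hΛ]
  have h1 : Fintype.card V ≤ Fintype.card W := by
    apply card_le_count F K A (K * A) hK hA (by positivity)
    · intro c d
      rw [hFdist]
      calc raagDist Λ _ _ ≤ K * raagDist Γ (rcan Γ hΓ c) (rcan Γ hΓ d) + A := (hbd _ _).2
        _ = K * l1 c d + A := by rw [hdistΓ]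
    · intro c d hcd
      have hz : raagDist Λ (f (rcan Γ hΓ c)) (f (rcan Γ hΓ d)) = 0 := by
        rw [← hFdist, hcd, l1_self]
      have hlow := (hbd (rcan Γ hΓ c) (rcan Γ hΓ d)).1
      rw [hz, hdistΓ] at hlow
      have hdiv : l1 c d / K ≤ A := by linarith
      rw [div_le_iff₀ hK0] at hdiv
      linarith
  have hG : ∀ c : W → ℤ, ∃ x : Raag Γ, raagDist Λ (f x) (rcan Λ hΛ c) ≤ A :=
    fun c => hsurj (rcan Λ hΛ c)
  choose G' hG' using hG
  set G : (W → ℤ) → (V → ℤ) := fun c => (theta Γ (G' c)).toAdd with hGdef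
  have hrc : ∀ c, rcan Γ hΓ (G c) = G' c := fun c => rcan_theta hΓ _
  have hGdist : ∀ c d, l1 (G c) (G d) = raagDist Γ (G' c) (G' d) := by
    intro c d; rw [raagDist_eq hΓ]
  have haux : ∀ c, l1 ((theta Λ (f (G' c))).toAdd) c = raagDist Λ (f (G' c)) (rcan Λ hΛ c) := by
    intro c
    rw [raagDist_eq hΛ, theta_rcan hΛ, toAdd_ofAdd]
  have hfd : ∀ c d, raagDist Λ (f (G' c)) (f (G' d)) ≤ A + (l1 c d + A) := by
    intro c d
    have t1 := hG' c
    have t2 := hG' d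
    have tri1 := raagDist_triangle hΛ (f (G' c)) (rcan Λ hΛ c) (f (G' d))
    have tri2 := raagDist_triangle hΛ (rcan Λ hΛ c) (rcan Λ hΛ d) (f (G' d))
    have hsym : raagDist Λ (rcan Λ hΛ d) (f (G' d)) = raagDist Λ (f (G' d)) (rcan Λ hΛ d) :=
      raagDist_symm hΛ _ _
    have hcd : raagDist Λ (rcan Λ hΛ c) (rcan Λ hΛ d) = l1 c d := by
      rw [raagDist_eq hΛ, theta_rcan hΛ, theta_rcan hΛ, toAdd_ofAdd, toAdd_ofAdd]
    linarith
  have h2 : Fintype.card W ≤ Fintype.card V := by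
    apply card_le_count G K (3 * K * A) (2 * A) hK (by positivity) (by positivity)
    · intro c d
      have hlow := (hbd (G' c) (G' d)).1
      have hup := hfd c d
      rw [hGdist]
      have hdiv : raagDist Γ (G' c) (G' d) / K ≤ l1 c d + 3 * A := by linarith
      rw [div_le_iff₀ hK0] at hdiv
      nlinarith
    · intro c d hcd
      have hGG : G' c = G' d := by
        have : theta Γ (G' c) = theta Γ (G' d) := Multiplicative.toAdd.injective hcd
        exact theta_injective hΓ this
      have t1 : l1 ((theta Λ (f (G' c))).toAdd) c ≤ A := by rw [haux]; exact hG' c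
      have t2 : l1 ((theta Λ (f (G' c))).toAdd) d ≤ A := by rw [hGG, haux]; exact hG' d
      have tri := l1_triangle c ((theta Λ (f (G' c))).toAdd) d
      have hsym : l1 c ((theta Λ (f (G' c))).toAdd) = l1 ((theta Λ (f (G' c))).toAdd) c :=
        l1_comm _ _
      linarith
  exact le_antisymm h1 h2

end QITransfer

section MapHom

variable {W : Type} [DecidableEq W] {Λ : SimpleGraph W}

/-- Homomorphism of RAAGs induced by a vertex map preserving adjacency. -/
def mapHom (ρ : V → W) (hρ : ∀ x y : V, Γ.Adj x y → Λ.Adj (ρ x) (ρ y)) :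
    Raag Γ →* Raag Λ :=
  PresentedGroup.toGroup (f := fun x => raagGen Λ (ρ x)) (by
    rintro r ⟨x, y, hxy, rfl⟩
    simp only [map_mul, map_inv, FreeGroup.lift_apply_of]
    rw [← commutatorElement_def]
    exact commutatorElement_eq_one_iff_commute.mpr (raag_rel (hρ x y hxy)))

@[simp] theorem mapHom_gen (ρ : V → W) (hρ : ∀ x y : V, Γ.Adj x y → Λ.Adj (ρ x) (ρ y))
    (x : V) : mapHom ρ hρ (raagGen Γ x) = raagGen Λ (ρ x) :=
  PresentedGroup.toGroup.of _

theorem mapHom_comp_apply (ρ : V → W) (σ : W → V)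
    (hρ : ∀ x y : V, Γ.Adj x y → Λ.Adj (ρ x) (ρ y))
    (hσ : ∀ x y : W, Λ.Adj x y → Γ.Adj (σ x) (σ y))
    (h : ∀ x, σ (ρ x) = x) (g : Raag Γ) :
    mapHom σ hσ (mapHom ρ hρ g) = g := by
  have hcomp : (mapHom σ hσ).comp (mapHom ρ hρ) = MonoidHom.id (Raag Γ) := by
    apply PresentedGroup.ext
    intro x
    show mapHom σ hσ (mapHom ρ hρ (raagGen Γ x)) = raagGen Γ x
    rw [mapHom_gen, mapHom_gen, h]
  exact DFunLike.congr_fun hcomp g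

theorem raagDist_map (ρ : V → W) (σ : W → V)
    (hρ : ∀ x y : V, Γ.Adj x y → Λ.Adj (ρ x) (ρ y))
    (hσ : ∀ x y : W, Λ.Adj x y → Γ.Adj (σ x) (σ y))
    (hσρ : ∀ x, σ (ρ x) = x) (hρσ : ∀ x, ρ (σ x) = x) (g h : Raag Γ) :
    raagDist Λ (mapHom ρ hρ g) (mapHom ρ hρ h) = raagDist Γ g h := by
  set φ := mapHom ρ hρ with hφ
  set ψ := mapHom σ hσ with hψ
  have hψφ : ∀ a, ψ (φ a) = a := mapHom_comp_apply ρ σ hρ hσ hσρ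
  have hφψ : ∀ a, φ (ψ a) = a := mapHom_comp_apply σ ρ hσ hρ hρσ
  have hgenφ : ∀ a : Raag Γ, (a ∈ Set.range (raagGen Γ) ∨ a⁻¹ ∈ Set.range (raagGen Γ)) →
      (φ a ∈ Set.range (raagGen Λ) ∨ (φ a)⁻¹ ∈ Set.range (raagGen Λ)) := by
    rintro a (⟨u, rfl⟩ | ⟨u, hu⟩)
    · exact Or.inl ⟨ρ u, (mapHom_gen ρ hρ u).symm⟩
    · refine Or.inr ⟨ρ u, ?_⟩
      rw [← map_inv, ← hu, mapHom_gen]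
  have hgenψ : ∀ a : Raag Λ, (a ∈ Set.range (raagGen Λ) ∨ a⁻¹ ∈ Set.range (raagGen Λ)) →
      (ψ a ∈ Set.range (raagGen Γ) ∨ (ψ a)⁻¹ ∈ Set.range (raagGen Γ)) := by
    rintro a (⟨u, rfl⟩ | ⟨u, hu⟩)
    · exact Or.inl ⟨σ u, (mapHom_gen σ hσ u).symm⟩
    · refine Or.inr ⟨σ u, ?_⟩
      rw [← map_inv, ← hu, mapHom_gen]
  unfold raagDist wordDist
  congr 1
  ext r
  constructor
  · rintro ⟨L, ⟨hmem, hprod⟩, rfl⟩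
    refine ⟨L.map ψ, ⟨?_, ?_⟩, by simp⟩
    · intro x hx
      rw [List.mem_map] at hx
      obtain ⟨y, hy, rfl⟩ := hx
      exact hgenψ y (hmem y hy)
    · have := congrArg ψ hprod
      rw [map_mul, hψφ, hψφ] at this
      rw [← this, ← map_list_prod]
  · rintro ⟨L, ⟨hmem, hprod⟩, rfl⟩
    refine ⟨L.map φ, ⟨?_, ?_⟩, by simp⟩
    · intro x hx
      rw [List.mem_map] at hx
      obtain ⟨y, hy, rfl⟩ := hx
      exact hgenφ y (hmem y hy)
    · have := congrArg φ hprod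
      rw [map_mul] at this
      rw [← this, ← map_list_prod]

theorem mapHom_param (ρ : V → W) (hρ : ∀ x y : V, Γ.Adj x y → Λ.Adj (ρ x) (ρ y))
    (l : StdGeod Γ) (n : ℤ) :
    mapHom ρ hρ (l.param n) =
      (StdGeod.mk (mapHom ρ hρ l.base) (ρ l.label) : StdGeod Λ).param n := by
  rw [StdGeod.param, StdGeod.param, map_mul, map_zpow, mapHom_gen]

theorem mapHom_carrier (ρ : V → W) (hρ : ∀ x y : V, Γ.Adj x y → Λ.Adj (ρ x) (ρ y))
    (l : StdGeod Γ) :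
    (mapHom ρ hρ) '' l.carrier =
      (StdGeod.mk (mapHom ρ hρ l.base) (ρ l.label) : StdGeod Λ).carrier := by
  ext y
  constructor
  · rintro ⟨_, ⟨n, rfl⟩, rfl⟩
    exact ⟨n, (mapHom_param ρ hρ l n).symm⟩
  · rintro ⟨n, rfl⟩
    exact ⟨l.param n, ⟨n, rfl⟩, mapHom_param ρ hρ l n⟩

end MapHom

end Aux

/-- For free abelian RAAGs (complete defining graphs), a
decoration-preserving based relative quasi-isometry exists if and only if the ranks
agree and there is a decoration-preserving bijection of the labelling sets matching
the base labels. -/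
theorem stmt18 {V W : Type} [Fintype V] [Fintype W]
    (Γ : SimpleGraph V) (Λ : SimpleGraph W)
    (hΓ : ∀ x y : V, x ≠ y → Γ.Adj x y) (hΛ : ∀ x y : W, x ≠ y → Λ.Adj x y)
    (n m : ℕ) (hn : Fintype.card V = n) (hm : Fintype.card W = m)
    (O : Type) (BΓ : Set V) (BΛ : Set W)
    (δhatΓ : V → O) (δhatΛ : W → O)
    (δΓ : Set (Set (Raag Γ)) → O) (δΛ : Set (Set (Raag Λ)) → O)
    (hδΓ : ∀ l : StdGeod Γ, l.label ∈ BΓ → δΓ (parClass l) = δhatΓ l.label)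
    (hδΛ : ∀ l : StdGeod Λ, l.label ∈ BΛ → δΛ (parClass l) = δhatΛ l.label)
    (v : V) (hv : v ∈ BΓ) (w : W) (hw : w ∈ BΛ) :
    (∃ (f : Raag Γ → Raag Λ) (fs : Set (Set (Raag Γ)) → Set (Set (Raag Λ))),
        IsDecorBasedRelQI Γ Λ BΓ BΛ δΓ δΛ (⟨1, v⟩ : StdGeod Γ) (⟨1, w⟩ : StdGeod Λ) f fs) ↔
      (n = m ∧ ∃ r : V → W, Set.BijOn r BΓ BΛ ∧ (∀ u ∈ BΓ, δhatΛ (r u) = δhatΓ u) ∧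
        r v = w) := by
  classical
  subst hn
  subst hm
  constructor
  · rintro ⟨f, fs, ⟨⟨K, A, hqi, hbij, hper⟩, hdec, hbase⟩⟩
    have hA : 0 ≤ A := hqi.2.1
    refine ⟨card_eq_of_qi hΓ hΛ f K A hqi, ?_⟩
    have key : ∀ u ∈ BΓ, ∃ t, t ∈ BΛ ∧
        fs (parClass (⟨1, u⟩ : StdGeod Γ)) = parClass (⟨1, t⟩ : StdGeod Λ) := by
      intro u hu
      have hF : parClass (⟨1, u⟩ : StdGeod Γ) ∈ periph Γ BΓ := parClass_mem_periph hΓ hu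
      have hmem := hbij.mapsTo hF
      obtain ⟨t, ht, heq⟩ := periph_mem_iff hΛ hmem
      exact ⟨t, ht, heq⟩
    set r : V → W := fun u => if h : u ∈ BΓ then (key u h).choose else w with hrdef
    have hr1 : ∀ u, ∀ h : u ∈ BΓ, r u ∈ BΛ ∧
        fs (parClass (⟨1, u⟩ : StdGeod Γ)) = parClass (⟨1, r u⟩ : StdGeod Λ) := by
      intro u h
      have : r u = (key u h).choose := by rw [hrdef]; simp only [dif_pos h]
      rw [this]
      exact (key u h).choose_spec
    refine ⟨r, ⟨fun u hu => (hr1 u hu).1, ?_, ?_⟩, ?_, ?_⟩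
    · intro u hu u' hu' huu
      have h1 := (hr1 u hu).2
      have h2 := (hr1 u' hu').2
      rw [huu] at h1
      have heq := hbij.injOn (parClass_mem_periph hΓ hu) (parClass_mem_periph hΓ hu')
        (h1.trans h2.symm)
      exact (parClass_eq_iff hΓ).mp heq
    · intro t ht
      obtain ⟨F, hF, hFt⟩ := hbij.surjOn (parClass_mem_periph hΛ ht)
      obtain ⟨u, hu, rfl⟩ := periph_mem_iff hΓ hF
      refine ⟨u, hu, ?_⟩
      have h1 := (hr1 u hu).2
      rw [hFt] at h1
      exact ((parClass_eq_iff hΛ).mp h1).symm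
    · intro u hu
      have h1 := (hr1 u hu).2
      have h2 := hdec _ (parClass_mem_periph hΓ hu)
      rw [h1, hδΛ ⟨1, r u⟩ (hr1 u hu).1, hδΓ ⟨1, u⟩ hu] at h2
      exact h2
    · have h1 := (hr1 v hv).2
      have hF : parClass (⟨1, v⟩ : StdGeod Γ) ∈ periph Γ BΓ := parClass_mem_periph hΓ hv
      obtain ⟨hfwd, -⟩ := hper _ hF
      have hmem : (⟨1, v⟩ : StdGeod Γ).carrier ∈ parClass (⟨1, v⟩ : StdGeod Γ) :=
        ⟨_, rfl, parallel_of_label_eq hΓ rfl⟩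
      obtain ⟨b, hb, hhaus⟩ := hfwd _ hmem
      rw [h1] at hb
      obtain ⟨k, rfl, hpar⟩ := hb
      have hfin1 : FinHaus (raagDist Λ) (f '' (⟨1, v⟩ : StdGeod Γ).carrier) k.carrier :=
        ⟨A, hA, hhaus⟩
      have hfin3 : FinHaus (raagDist Λ) k.carrier (⟨1, w⟩ : StdGeod Λ).carrier :=
        finHaus_trans hΛ (finHaus_symm hΛ hfin1) hbase
      have hkw : k.label = w := label_eq_of_finHaus hΛ hfin3
      have hk : (⟨1, r v⟩ : StdGeod Λ).label = k.label := (parallel_iff_label hΛ).mp hpar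
      exact hk.trans hkw
  · rintro ⟨hnm, r, hrbij, hrδ, hrv⟩
    -- build an equiv ρ : V ≃ W extending r
    have f0 : ↥BΓ → ↥BΛ := fun u => ⟨r u, hrbij.mapsTo u.2⟩
    have hf0 : Function.Bijective (fun u : ↥BΓ => (⟨r u, hrbij.mapsTo u.2⟩ : ↥BΛ)) := by
      constructor
      · intro a b hab
        have : r a = r b := congrArg Subtype.val hab
        exact Subtype.ext (hrbij.injOn a.2 b.2 this)
      · rintro ⟨t, ht⟩
        obtain ⟨u, hu, hru⟩ := hrbij.surjOn ht
        exact ⟨⟨u, hu⟩, Subtype.ext hru⟩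
    set e1 : ↥BΓ ≃ ↥BΛ := Equiv.ofBijective _ hf0 with he1
    have hcard1 : Fintype.card ↥BΓ = Fintype.card ↥BΛ := Fintype.card_congr e1
    have hcardc : Fintype.card ↥(BΓᶜ) = Fintype.card ↥(BΛᶜ) := by
      rw [Fintype.card_compl_set, Fintype.card_compl_set, hcard1, hnm]
    set e2 : ↥(BΓᶜ) ≃ ↥(BΛᶜ) := Fintype.equivOfCardEq hcardc with he2
    set ρ : V ≃ W :=
      ((Equiv.Set.sumCompl BΓ).symm.trans ((e1.sumCongr e2).trans (Equiv.Set.sumCompl BΛ)))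
      with hρdef
    have hρr : ∀ u ∈ BΓ, ρ u = r u := by
      intro u hu
      show Equiv.Set.sumCompl BΛ ((e1.sumCongr e2) ((Equiv.Set.sumCompl BΓ).symm u)) = r u
      rw [Equiv.Set.sumCompl_symm_apply_of_mem hu]
      rfl
    have hρBΛ : ∀ u ∈ BΓ, ρ u ∈ BΛ := fun u hu => (hρr u hu) ▸ hrbij.mapsTo hu
    have hρsymm : ∀ t ∈ BΛ, ρ.symm t ∈ BΓ := by
      intro t ht
      obtain ⟨u, hu, hru⟩ := hrbij.surjOn ht
      have : ρ u = t := by rw [hρr u hu, hru]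
      rw [← this, ρ.symm_apply_apply]
      exact hu
    have hadjρ : ∀ x y : V, Γ.Adj x y → Λ.Adj (ρ x) (ρ y) :=
      fun x y hxy => hΛ _ _ fun h => hxy.ne (ρ.injective h)
    have hadjσ : ∀ x y : W, Λ.Adj x y → Γ.Adj (ρ.symm x) (ρ.symm y) :=
      fun x y hxy => hΓ _ _ fun h => hxy.ne (ρ.symm.injective h)
    set φ : Raag Γ →* Raag Λ := mapHom (⇑ρ) hadjρ with hφdef
    set ψ : Raag Λ →* Raag Γ := mapHom (⇑ρ.symm) hadjσ with hψdef
    have hψφ : ∀ a, ψ (φ a) = a :=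
      mapHom_comp_apply (⇑ρ) (⇑ρ.symm) hadjρ hadjσ ρ.symm_apply_apply
    have hφψ : ∀ a, φ (ψ a) = a :=
      mapHom_comp_apply (⇑ρ.symm) (⇑ρ) hadjσ hadjρ ρ.apply_symm_apply
    have hdist : ∀ g h : Raag Γ, raagDist Λ (φ g) (φ h) = raagDist Γ g h :=
      raagDist_map (⇑ρ) (⇑ρ.symm) hadjρ hadjσ ρ.symm_apply_apply ρ.apply_symm_apply
    have hφinj : Function.Injective ⇑φ := fun a b hab => by
      rw [← hψφ a, ← hψφ b, hab]
    set fs : Set (Set (Raag Γ)) → Set (Set (Raag Λ)) :=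
      fun F => (fun S => ⇑φ '' S) '' F with hfsdef
    have himg : ∀ l : StdGeod Γ,
        ⇑φ '' l.carrier = (StdGeod.mk (φ l.base) (ρ l.label) : StdGeod Λ).carrier :=
      fun l => mapHom_carrier (⇑ρ) hadjρ l
    have himgpar : ∀ l : StdGeod Γ,
        fs (parClass l) = parClass (StdGeod.mk (φ l.base) (ρ l.label) : StdGeod Λ) := by
      intro l
      ext S
      constructor
      · rintro ⟨S₀, ⟨k, rfl, hpar⟩, rfl⟩
        refine ⟨⟨φ k.base, ρ k.label⟩, himg k, parallel_of_label_eq hΛ ?_⟩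
        show ρ l.label = ρ k.label
        exact congrArg ρ ((parallel_iff_label hΓ).mp hpar)
      · rintro ⟨k', rfl, hpar⟩
        refine ⟨(⟨ψ k'.base, ρ.symm k'.label⟩ : StdGeod Γ).carrier,
          ⟨⟨ψ k'.base, ρ.symm k'.label⟩, rfl, parallel_of_label_eq hΓ ?_⟩, ?_⟩
        · show l.label = ρ.symm k'.label
          have hlab : ρ l.label = k'.label := (parallel_iff_label hΛ).mp hpar
          rw [← hlab, ρ.symm_apply_apply]
        · show ⇑φ '' (⟨ψ k'.base, ρ.symm k'.label⟩ : StdGeod Γ).carrier = k'.carrier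
          rw [himg]
          show (⟨φ (ψ k'.base), ρ (ρ.symm k'.label)⟩ : StdGeod Λ).carrier = k'.carrier
          rw [hφψ k'.base, ρ.apply_symm_apply]
    have hrefl : ∀ S : Set (Raag Λ), HausLE (raagDist Λ) S S 0 :=
      fun S => ⟨fun s hs => ⟨s, hs, by rw [raagDist_self hΛ]⟩,
        fun s hs => ⟨s, hs, by rw [raagDist_self hΛ]⟩⟩
    refine ⟨⇑φ, fs, ⟨⟨1, 0, ?_, ?_, ?_⟩, ?_, ?_⟩⟩
    · refine ⟨le_refl 1, le_refl 0, fun x x' => ?_, fun y => ⟨ψ y, ?_⟩⟩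
      · rw [hdist x x']
        constructor
        · rw [div_one, sub_zero]
        · rw [one_mul, add_zero]
      · rw [hφψ y, raagDist_self hΛ]
    · refine ⟨?_, ?_, ?_⟩
      · rintro F ⟨l, hl, rfl⟩
        rw [himgpar l]
        exact ⟨⟨φ l.base, ρ l.label⟩, hρBΛ l.label hl, rfl⟩
      · have h1 : Function.Injective (Set.image ⇑φ) := Set.image_injective.mpr hφinj
        have h2 : Function.Injective fs := Set.image_injective.mpr h1
        exact fun F _ F' _ h => h2 h
      · rintro F' ⟨l', hl', rfl⟩
        refine ⟨parClass (⟨ψ l'.base, ρ.symm l'.label⟩ : StdGeod Γ),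
          ⟨⟨ψ l'.base, ρ.symm l'.label⟩, hρsymm l'.label hl', rfl⟩, ?_⟩
        rw [himgpar]
        apply (parClass_eq_iff hΛ).mpr
        show ρ (ρ.symm l'.label) = l'.label
        exact ρ.apply_symm_apply _
    · intro F hF
      constructor
      · intro a ha
        exact ⟨⇑φ '' a, ⟨a, ha, rfl⟩, hrefl _⟩
      · rintro b ⟨a, ha, rfl⟩
        exact ⟨a, ha, hrefl _⟩
    · rintro F ⟨l, hl, rfl⟩
      rw [himgpar l, hδΛ ⟨φ l.base, ρ l.label⟩ (hρBΛ l.label hl), hδΓ l hl]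
      show δhatΛ (ρ l.label) = δhatΓ l.label
      rw [hρr l.label hl]
      exact hrδ l.label hl
    · show FinHaus (raagDist Λ) (⇑φ '' (⟨1, v⟩ : StdGeod Γ).carrier)
        (⟨1, w⟩ : StdGeod Λ).carrier
      rw [himg]
      have hmk : (StdGeod.mk (φ 1) (ρ v) : StdGeod Λ) = ⟨1, w⟩ := by
        rw [map_one]
        rw [hρr v hv, hrv]
      rw [show (StdGeod.mk (φ 1) (ρ v) : StdGeod Λ).carrier =
        (⟨1, w⟩ : StdGeod Λ).carrier from by rw [hmk]]
      exact finHaus_refl hΛ _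

end
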